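/- The Burnside kernel satisfies detailed balance with respect to π: for all x, y ∈ X, π(x)·P(x,y) = π(y)·P(y,x). -/

import Mathlib

/-- The stabilizer of `x ∈ X` in the finite group `G`, as a `Finset`. -/
def stabFinset (G X : Type*) [Group G] [Fintype G] [MulAction G X] [DecidableEq X]
    (x : X) : Finset G :=
  Finset.univ.filter fun g : G => g • x = x

/-- The set of fixed points of `g ∈ G` on `X`, as a `Finset`. -/
def fixFinset (G X : Type*) [Group G] [Fintype X] [MulAction G X] [DecidableEq X]
    (g : G) : Finset X :=
  Finset.univ.filter fun y : X => g • y = y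

/-- The Burnside kernel
`P(x,y) = (1/|stab_G(x)|) · Σ_{g ∈ stab_G(x) ∩ stab_G(y)} 1/|Fix_X(g)|`. -/
noncomputable def burnsideKernel (G X : Type*) [Group G] [Fintype G] [DecidableEq G]
    [Fintype X] [MulAction G X] [DecidableEq X] (x y : X) : ℝ :=
  ((stabFinset G X x).card : ℝ)⁻¹ *
    ∑ g ∈ stabFinset G X x ∩ stabFinset G X y, ((fixFinset G X g).card : ℝ)⁻¹

/-- The orbit `O_x = G·x` of `x ∈ X`, as a `Finset`. -/
def orbitFinset (G X : Type*) [Group G] [Fintype G] [Fintype X] [MulAction G X]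
    [DecidableEq X] (x : X) : Finset X :=
  Finset.univ.filter fun y : X => ∃ g : G, g • x = y

/-- The number of `G`-orbits on `X`, i.e. `|Θ|`. -/
def numOrbits (G X : Type*) [Group G] [Fintype G] [Fintype X] [MulAction G X]
    [DecidableEq X] : ℕ :=
  (Finset.univ.image fun z : X => orbitFinset G X z).card

/-- The stationary distribution `π(x) = 1/(|Θ|·|O_x|)`. -/
noncomputable def burnsidePi (G X : Type*) [Group G] [Fintype G] [Fintype X]
    [MulAction G X] [DecidableEq X] (x : X) : ℝ :=
  ((numOrbits G X : ℝ) * ((orbitFinset G X x).card : ℝ))⁻¹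

private lemma burnside_key (G X : Type*) [Group G] [Fintype G] [DecidableEq G] [Fintype X]
    [MulAction G X] [DecidableEq X] (x : X) :
    (orbitFinset G X x).card * (stabFinset G X x).card = Fintype.card G := by
  haveI : Fintype (MulAction.orbit G x) := Set.fintypeRange _
  have h1 : (orbitFinset G X x).card = Fintype.card (MulAction.orbit G x) := by
    rw [← Set.toFinset_card]
    congr 1
    ext z
    rw [Set.mem_toFinset]
    simp [orbitFinset, MulAction.mem_orbit_iff]
  have h2 : (stabFinset G X x).card = Fintype.card (MulAction.stabilizer G x) := by
    rw [← Fintype.card_coe]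
    exact Fintype.card_congr (Equiv.subtypeEquivRight (by
      simp [stabFinset, MulAction.mem_stabilizer_iff]))
  rw [h1, h2, MulAction.card_orbit_mul_card_stabilizer_eq_card_group]

/-- The Burnside kernel satisfies detailed balance with respect to `π`:
for all `x, y ∈ X`, `π(x)·P(x,y) = π(y)·P(y,x)`. -/
theorem burnside_detailed_balance (G X : Type*) [Group G] [Fintype G]
    [DecidableEq G] [Fintype X] [Nonempty X] [MulAction G X] [DecidableEq X]
    (x y : X) :
    burnsidePi G X x * burnsideKernel G X x y =
      burnsidePi G X y * burnsideKernel G X y x := by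
  unfold burnsidePi burnsideKernel
  have e : ∀ b c S : ℝ, b * c = (Fintype.card G : ℝ) →
      ((numOrbits G X : ℝ) * b)⁻¹ * (c⁻¹ * S) =
        (numOrbits G X : ℝ)⁻¹ * (Fintype.card G : ℝ)⁻¹ * S := by
    intro b c S h
    rw [← h, mul_inv, mul_inv]; ring
  rw [Finset.inter_comm,
    e _ _ _ (by exact_mod_cast burnside_key G X x),
    e _ _ _ (by exact_mod_cast burnside_key G X y)]
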